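/- The diamond K_4 − e (the graph obtained from the complete graph on 4 vertices by deleting one edge) is not a contact B0-VPG graph. -/

import Mathlib

/-- An axis-parallel nontrivial segment on the grid: `horiz` tells its direction,
`coord` is the fixed coordinate (the `y`-coordinate if horizontal, the `x`-coordinate
if vertical) and `[lo, hi]` (with `lo < hi`, i.e. the segment is nontrivial) is the
interval spanned by the varying coordinate. -/
structure GridSeg where
  horiz : Bool
  coord : ℤ
  lo : ℤ
  hi : ℤ
  lt : lo < hi

namespace GridSeg

/-- The set of points (in the real plane) of a grid segment. -/
def pts (s : GridSeg) : Set (ℝ × ℝ) :=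
  if s.horiz then {p | p.2 = (s.coord : ℝ) ∧ (s.lo : ℝ) ≤ p.1 ∧ p.1 ≤ (s.hi : ℝ)}
  else {p | p.1 = (s.coord : ℝ) ∧ (s.lo : ℝ) ≤ p.2 ∧ p.2 ≤ (s.hi : ℝ)}

/-- The interior of a grid segment. -/
def interior (s : GridSeg) : Set (ℝ × ℝ) :=
  if s.horiz then {p | p.2 = (s.coord : ℝ) ∧ (s.lo : ℝ) < p.1 ∧ p.1 < (s.hi : ℝ)}
  else {p | p.1 = (s.coord : ℝ) ∧ (s.lo : ℝ) < p.2 ∧ p.2 < (s.hi : ℝ)}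

/-- The two endpoints of a grid segment. -/
def ends (s : GridSeg) : Set (ℝ × ℝ) :=
  if s.horiz then {((s.lo : ℝ), (s.coord : ℝ)), ((s.hi : ℝ), (s.coord : ℝ))}
  else {((s.coord : ℝ), (s.lo : ℝ)), ((s.coord : ℝ), (s.hi : ℝ))}

/-- Two segments touch if they share a point which is an endpoint of at least
one of the two segments. -/
def Touch (s t : GridSeg) : Prop :=
  ∃ p : ℝ × ℝ, p ∈ s.pts ∧ p ∈ t.pts ∧ (p ∈ s.ends ∨ p ∈ t.ends)

end GridSeg

/-- `f` is a contact B₀-VPG representation of `G`: the segments of distinct vertices are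
interiorly disjoint, and two distinct vertices are adjacent iff their segments touch. -/
def IsB0Rep {V : Type*} (G : SimpleGraph V) (f : V → GridSeg) : Prop :=
  (∀ v w : V, v ≠ w → Disjoint (GridSeg.interior (f v)) (GridSeg.interior (f w))) ∧
  (∀ v w : V, v ≠ w → (G.Adj v w ↔ GridSeg.Touch (f v) (f w)))

/-- A graph is contact B₀-VPG if it admits a contact B₀-VPG representation. -/
def ContactB0VPG {V : Type*} (G : SimpleGraph V) : Prop :=
  ∃ f : V → GridSeg, IsB0Rep G f

/-- The diamond `K₄ − e`: the complete graph on four vertices minus the edge `{2, 3}`. -/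
def diamond : SimpleGraph (Fin 4) where
  Adj a b := a ≠ b ∧ ¬(a = 2 ∧ b = 3) ∧ ¬(a = 3 ∧ b = 2)
  symm := by
    constructor
    rintro a b ⟨h1, h2, h3⟩
    exact ⟨h1.symm, fun ⟨x, y⟩ => h3 ⟨y, x⟩, fun ⟨x, y⟩ => h2 ⟨y, x⟩⟩
  loopless := by
    constructor
    rintro a ⟨h, -, -⟩
    exact h rfl

open GridSeg

/-- Interior disjointness for parallel collinear segments. -/
lemma para_disj_arith {s t : GridSeg} (hb : s.horiz = t.horiz) (hc : s.coord = t.coord)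
    (hd : Disjoint s.interior t.interior) : s.hi ≤ t.lo ∨ t.hi ≤ s.lo := by
  by_contra hcon
  push_neg at hcon
  obtain ⟨h1, h2⟩ := hcon
  have hsl := s.lt
  have htl := t.lt
  set a : ℝ := max (s.lo : ℝ) (t.lo : ℝ) with ha
  set b : ℝ := min (s.hi : ℝ) (t.hi : ℝ) with hb'
  have hab : a < b := by
    rw [ha, hb', max_lt_iff, lt_min_iff, lt_min_iff]
    refine ⟨⟨?_, ?_⟩, ?_, ?_⟩ <;> exact_mod_cast (by omega)
  set x : ℝ := (a + b) / 2 with hx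
  have hax : a < x := by rw [hx]; linarith
  have hxb : x < b := by rw [hx]; linarith
  have hsx1 : (s.lo : ℝ) < x := lt_of_le_of_lt (le_max_left _ _) hax
  have hsx2 : x < (s.hi : ℝ) := lt_of_lt_of_le hxb (min_le_left _ _)
  have htx1 : (t.lo : ℝ) < x := lt_of_le_of_lt (le_max_right _ _) hax
  have htx2 : x < (t.hi : ℝ) := lt_of_lt_of_le hxb (min_le_right _ _)
  cases hs : s.horiz with
  | true =>
    have ht : t.horiz = true := hb ▸ hs
    have hps : (x, (s.coord : ℝ)) ∈ s.interior := by
      simp [GridSeg.interior, hs, hsx1, hsx2]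
    have hpt : (x, (s.coord : ℝ)) ∈ t.interior := by
      simp [GridSeg.interior, ht, hc, htx1, htx2]
    exact Set.disjoint_left.1 hd hps hpt
  | false =>
    have ht : t.horiz = false := hb ▸ hs
    have hps : ((s.coord : ℝ), x) ∈ s.interior := by
      simp [GridSeg.interior, hs, hsx1, hsx2]
    have hpt : ((s.coord : ℝ), x) ∈ t.interior := by
      simp [GridSeg.interior, ht, hc, htx1, htx2]
    exact Set.disjoint_left.1 hd hps hpt

/-- Touching parallel segments are collinear and glued at endpoints. -/
lemma para_touch_arith {s t : GridSeg} (hb : s.horiz = t.horiz)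
    (hd : Disjoint s.interior t.interior) (h : s.Touch t) :
    s.coord = t.coord ∧ (s.hi = t.lo ∨ t.hi = s.lo) := by
  obtain ⟨p, hps, hpt, _⟩ := h
  cases hs : s.horiz with
  | true =>
    have ht : t.horiz = true := hb ▸ hs
    simp only [GridSeg.pts, hs, ht, if_true, Set.mem_setOf_eq] at hps hpt
    obtain ⟨e1, l1, r1⟩ := hps
    obtain ⟨e2, l2, r2⟩ := hpt
    have hc : s.coord = t.coord := by exact_mod_cast (by rw [← e1, e2] : (s.coord : ℝ) = t.coord)
    have m1 : s.lo ≤ t.hi := by exact_mod_cast le_trans l1 r2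
    have m2 : t.lo ≤ s.hi := by exact_mod_cast le_trans l2 r1
    have := para_disj_arith hb hc hd
    exact ⟨hc, by omega⟩
  | false =>
    have ht : t.horiz = false := hb ▸ hs
    simp only [GridSeg.pts, hs, ht, Bool.false_eq_true, if_false, Set.mem_setOf_eq] at hps hpt
    obtain ⟨e1, l1, r1⟩ := hps
    obtain ⟨e2, l2, r2⟩ := hpt
    have hc : s.coord = t.coord := by exact_mod_cast (by rw [← e1, e2] : (s.coord : ℝ) = t.coord)
    have m1 : s.lo ≤ t.hi := by exact_mod_cast le_trans l1 r2
    have m2 : t.lo ≤ s.hi := by exact_mod_cast le_trans l2 r1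
    have := para_disj_arith hb hc hd
    exact ⟨hc, by omega⟩

/-- Collinear parallel segments whose intervals meet do touch. -/
lemma para_inter_touch {s t : GridSeg} (hb : s.horiz = t.horiz) (hc : s.coord = t.coord)
    (m1 : s.lo ≤ t.hi) (m2 : t.lo ≤ s.hi) : s.Touch t := by
  have hsl := s.lt
  have htl := t.lt
  set x : ℤ := max s.lo t.lo with hx
  have hxs1 : (s.lo : ℝ) ≤ (x : ℝ) := by exact_mod_cast le_max_left _ _
  have hxs2 : (x : ℝ) ≤ (s.hi : ℝ) := by exact_mod_cast (by omega : x ≤ s.hi)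
  have hxt1 : (t.lo : ℝ) ≤ (x : ℝ) := by exact_mod_cast le_max_right _ _
  have hxt2 : (x : ℝ) ≤ (t.hi : ℝ) := by exact_mod_cast (by omega : x ≤ t.hi)
  have hend : x = s.lo ∨ x = t.lo := by omega
  cases hs : s.horiz with
  | true =>
    have ht : t.horiz = true := hb ▸ hs
    refine ⟨((x : ℝ), (s.coord : ℝ)), ?_, ?_, ?_⟩
    · simp [GridSeg.pts, hs, hxs1, hxs2]
    · simp [GridSeg.pts, ht, ← hc, hxt1, hxt2]
    · rcases hend with h | h
      · left; simp [GridSeg.ends, hs, h]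
      · right; simp [GridSeg.ends, ht, ← hc, h]
  | false =>
    have ht : t.horiz = false := hb ▸ hs
    refine ⟨((s.coord : ℝ), (x : ℝ)), ?_, ?_, ?_⟩
    · simp [GridSeg.pts, hs, hxs1, hxs2]
    · simp [GridSeg.pts, ht, ← hc, hxt1, hxt2]
    · rcases hend with h | h
      · left; simp [GridSeg.ends, hs, h]
      · right; simp [GridSeg.ends, ht, ← hc, h]

/-- Touching perpendicular segments: the crossing point lies in both ranges and is
an endpoint of one of them. -/
lemma perp_touch_arith {s t : GridSeg} (hb : s.horiz ≠ t.horiz) (h : s.Touch t) :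
    s.lo ≤ t.coord ∧ t.coord ≤ s.hi ∧ t.lo ≤ s.coord ∧ s.coord ≤ t.hi ∧
      (t.coord = s.lo ∨ t.coord = s.hi ∨ s.coord = t.lo ∨ s.coord = t.hi) := by
  obtain ⟨p, hps, hpt, hend⟩ := h
  cases hs : s.horiz with
  | true =>
    have ht : t.horiz = false := by
      cases h' : t.horiz
      · rfl
      · exact absurd (hs.trans h'.symm) hb
    simp only [GridSeg.pts, hs, ht, Bool.false_eq_true, if_true, if_false,
      Set.mem_setOf_eq] at hps hpt
    obtain ⟨e1, l1, r1⟩ := hps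
    obtain ⟨e2, l2, r2⟩ := hpt
    rw [e2] at l1 r1
    rw [e1] at l2 r2
    refine ⟨by exact_mod_cast l1, by exact_mod_cast r1, by exact_mod_cast l2,
      by exact_mod_cast r2, ?_⟩
    rcases hend with hE | hE
    · simp only [GridSeg.ends, hs, if_true, Set.mem_insert_iff, Set.mem_singleton_iff,
        Prod.ext_iff] at hE
      rcases hE with ⟨hE, _⟩ | ⟨hE, _⟩
      · left; exact_mod_cast e2 ▸ hE
      · right; left; exact_mod_cast e2 ▸ hE
    · simp only [GridSeg.ends, ht, Bool.false_eq_true, if_false, Set.mem_insert_iff,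
        Set.mem_singleton_iff, Prod.ext_iff] at hE
      rcases hE with ⟨_, hE⟩ | ⟨_, hE⟩
      · right; right; left; exact_mod_cast e1 ▸ hE
      · right; right; right; exact_mod_cast e1 ▸ hE
  | false =>
    have ht : t.horiz = true := by
      cases h' : t.horiz
      · exact absurd (hs.trans h'.symm) hb
      · rfl
    simp only [GridSeg.pts, hs, ht, Bool.false_eq_true, if_true, if_false,
      Set.mem_setOf_eq] at hps hpt
    obtain ⟨e1, l1, r1⟩ := hps
    obtain ⟨e2, l2, r2⟩ := hpt
    rw [e2] at l1 r1
    rw [e1] at l2 r2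
    refine ⟨by exact_mod_cast l1, by exact_mod_cast r1, by exact_mod_cast l2,
      by exact_mod_cast r2, ?_⟩
    rcases hend with hE | hE
    · simp only [GridSeg.ends, hs, Bool.false_eq_true, if_false, Set.mem_insert_iff,
        Set.mem_singleton_iff, Prod.ext_iff] at hE
      rcases hE with ⟨_, hE⟩ | ⟨_, hE⟩
      · left; exact_mod_cast e2 ▸ hE
      · right; left; exact_mod_cast e2 ▸ hE
    · simp only [GridSeg.ends, ht, if_true, Set.mem_insert_iff,
        Set.mem_singleton_iff, Prod.ext_iff] at hE
      rcases hE with ⟨hE, _⟩ | ⟨hE, _⟩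
      · right; right; left; exact_mod_cast e1 ▸ hE
      · right; right; right; exact_mod_cast e1 ▸ hE

/-- Converse: perpendicular segments with crossing point in range, being an endpoint of
one of them, do touch. -/
lemma perp_touch_intro {s t : GridSeg} (hb : s.horiz ≠ t.horiz)
    (h : s.lo ≤ t.coord ∧ t.coord ≤ s.hi ∧ t.lo ≤ s.coord ∧ s.coord ≤ t.hi ∧
      (t.coord = s.lo ∨ t.coord = s.hi ∨ s.coord = t.lo ∨ s.coord = t.hi)) :
    s.Touch t := by
  obtain ⟨l1, r1, l2, r2, hend⟩ := h
  have l1' : (s.lo : ℝ) ≤ (t.coord : ℝ) := by exact_mod_cast l1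
  have r1' : (t.coord : ℝ) ≤ (s.hi : ℝ) := by exact_mod_cast r1
  have l2' : (t.lo : ℝ) ≤ (s.coord : ℝ) := by exact_mod_cast l2
  have r2' : (s.coord : ℝ) ≤ (t.hi : ℝ) := by exact_mod_cast r2
  cases hs : s.horiz with
  | true =>
    have ht : t.horiz = false := by
      cases h' : t.horiz
      · rfl
      · exact absurd (hs.trans h'.symm) hb
    refine ⟨((t.coord : ℝ), (s.coord : ℝ)), ?_, ?_, ?_⟩
    · simp [GridSeg.pts, hs, l1', r1']
    · simp [GridSeg.pts, ht, l2', r2']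
    · rcases hend with h | h | h | h
      · left; simp [GridSeg.ends, hs, h]
      · left; simp [GridSeg.ends, hs, h]
      · right; simp [GridSeg.ends, ht, h]
      · right; simp [GridSeg.ends, ht, h]
  | false =>
    have ht : t.horiz = true := by
      cases h' : t.horiz
      · exact absurd (hs.trans h'.symm) hb
      · rfl
    refine ⟨((s.coord : ℝ), (t.coord : ℝ)), ?_, ?_, ?_⟩
    · simp [GridSeg.pts, hs, l1', r1']
    · simp [GridSeg.pts, ht, l2', r2']
    · rcases hend with h | h | h | h
      · left; simp [GridSeg.ends, hs, h]
      · left; simp [GridSeg.ends, hs, h]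
      · right; simp [GridSeg.ends, ht, h]
      · right; simp [GridSeg.ends, ht, h]

set_option maxHeartbeats 1000000 in
/-- The purely arithmetic core: no four segments can realize the diamond contacts. -/
lemma key_arith (b0 b1 b2 b3 : Bool) (c0 l0 h0 c1 l1 h1 c2 l2 h2 c3 l3 h3 : ℤ)
    (lt0 : l0 < h0) (lt1 : l1 < h1) (lt2 : l2 < h2) (lt3 : l3 < h3)
    (E01 : (b0 = b1 ∧ c0 = c1 ∧ (h0 = l1 ∨ h1 = l0)) ∨
      (b0 ≠ b1 ∧ l0 ≤ c1 ∧ c1 ≤ h0 ∧ l1 ≤ c0 ∧ c0 ≤ h1 ∧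
        (c1 = l0 ∨ c1 = h0 ∨ c0 = l1 ∨ c0 = h1)))
    (E02 : (b0 = b2 ∧ c0 = c2 ∧ (h0 = l2 ∨ h2 = l0)) ∨
      (b0 ≠ b2 ∧ l0 ≤ c2 ∧ c2 ≤ h0 ∧ l2 ≤ c0 ∧ c0 ≤ h2 ∧
        (c2 = l0 ∨ c2 = h0 ∨ c0 = l2 ∨ c0 = h2)))
    (E03 : (b0 = b3 ∧ c0 = c3 ∧ (h0 = l3 ∨ h3 = l0)) ∨
      (b0 ≠ b3 ∧ l0 ≤ c3 ∧ c3 ≤ h0 ∧ l3 ≤ c0 ∧ c0 ≤ h3 ∧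
        (c3 = l0 ∨ c3 = h0 ∨ c0 = l3 ∨ c0 = h3)))
    (E12 : (b1 = b2 ∧ c1 = c2 ∧ (h1 = l2 ∨ h2 = l1)) ∨
      (b1 ≠ b2 ∧ l1 ≤ c2 ∧ c2 ≤ h1 ∧ l2 ≤ c1 ∧ c1 ≤ h2 ∧
        (c2 = l1 ∨ c2 = h1 ∨ c1 = l2 ∨ c1 = h2)))
    (E13 : (b1 = b3 ∧ c1 = c3 ∧ (h1 = l3 ∨ h3 = l1)) ∨
      (b1 ≠ b3 ∧ l1 ≤ c3 ∧ c3 ≤ h1 ∧ l3 ≤ c1 ∧ c1 ≤ h3 ∧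
        (c3 = l1 ∨ c3 = h1 ∨ c1 = l3 ∨ c1 = h3)))
    (N23a : b2 = b3 → ¬(c2 = c3 ∧ l2 ≤ h3 ∧ l3 ≤ h2))
    (N23b : b2 ≠ b3 → ¬(l2 ≤ c3 ∧ c3 ≤ h2 ∧ l3 ≤ c2 ∧ c2 ≤ h3 ∧
      (c3 = l2 ∨ c3 = h2 ∨ c2 = l3 ∨ c2 = h3)))
    (D01 : b0 = b1 → c0 = c1 → h0 ≤ l1 ∨ h1 ≤ l0)
    (D02 : b0 = b2 → c0 = c2 → h0 ≤ l2 ∨ h2 ≤ l0)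
    (D03 : b0 = b3 → c0 = c3 → h0 ≤ l3 ∨ h3 ≤ l0)
    (D12 : b1 = b2 → c1 = c2 → h1 ≤ l2 ∨ h2 ≤ l1)
    (D13 : b1 = b3 → c1 = c3 → h1 ≤ l3 ∨ h3 ≤ l1)
    (D23 : b2 = b3 → c2 = c3 → h2 ≤ l3 ∨ h3 ≤ l2) : False := by
  cases b0 <;> cases b1 <;> cases b2 <;> cases b3 <;>
    simp only [ne_eq, reduceCtorEq, not_false_eq_true, not_true_eq_false, true_and,
      false_and, and_true, and_false, or_false, false_or, true_or, or_true,
      false_implies, true_implies, not_false_iff, forall_const]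
      at E01 E02 E03 E12 E13 N23a N23b D01 D02 D03 D12 D13 D23 <;>
    omega

lemma touch_arith {s t : GridSeg} (hd : Disjoint s.interior t.interior) (h : s.Touch t) :
    (s.horiz = t.horiz ∧ s.coord = t.coord ∧ (s.hi = t.lo ∨ t.hi = s.lo)) ∨
    (s.horiz ≠ t.horiz ∧ s.lo ≤ t.coord ∧ t.coord ≤ s.hi ∧ t.lo ≤ s.coord ∧ s.coord ≤ t.hi ∧
      (t.coord = s.lo ∨ t.coord = s.hi ∨ s.coord = t.lo ∨ s.coord = t.hi)) := by
  by_cases hb : s.horiz = t.horiz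
  · exact Or.inl ⟨hb, para_touch_arith hb hd h⟩
  · exact Or.inr ⟨hb, perp_touch_arith hb h⟩


/-- The diamond `K₄ − e` is not a contact B₀-VPG graph. -/
theorem diamond_not_contactB0VPG : ¬ ContactB0VPG diamond := by
  rintro ⟨f, hdisj, hadj⟩
  have adj : ∀ v w : Fin 4, v ≠ w → ¬(v = 2 ∧ w = 3) → ¬(v = 3 ∧ w = 2) →
      (f v).Touch (f w) := fun v w h1 h2 h3 => (hadj v w h1).1 ⟨h1, h2, h3⟩
  have e01 := adj 0 1 (by decide) (by decide) (by decide)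
  have e02 := adj 0 2 (by decide) (by decide) (by decide)
  have e03 := adj 0 3 (by decide) (by decide) (by decide)
  have e12 := adj 1 2 (by decide) (by decide) (by decide)
  have e13 := adj 1 3 (by decide) (by decide) (by decide)
  have n23 : ¬ (f 2).Touch (f 3) := fun h =>
    ((hadj 2 3 (by decide)).2 h).2.1 ⟨rfl, rfl⟩
  have E01 := touch_arith (hdisj 0 1 (by decide)) e01
  have E02 := touch_arith (hdisj 0 2 (by decide)) e02
  have E03 := touch_arith (hdisj 0 3 (by decide)) e03
  have E12 := touch_arith (hdisj 1 2 (by decide)) e12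
  have E13 := touch_arith (hdisj 1 3 (by decide)) e13
  have N23a : (f 2).horiz = (f 3).horiz →
      ¬((f 2).coord = (f 3).coord ∧ (f 2).lo ≤ (f 3).hi ∧ (f 3).lo ≤ (f 2).hi) :=
    fun hb ⟨hc, m1, m2⟩ => n23 (para_inter_touch hb hc m1 m2)
  have N23b : (f 2).horiz ≠ (f 3).horiz →
      ¬((f 2).lo ≤ (f 3).coord ∧ (f 3).coord ≤ (f 2).hi ∧ (f 3).lo ≤ (f 2).coord ∧
        (f 2).coord ≤ (f 3).hi ∧ ((f 3).coord = (f 2).lo ∨ (f 3).coord = (f 2).hi ∨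
          (f 2).coord = (f 3).lo ∨ (f 2).coord = (f 3).hi)) :=
    fun hb h => n23 (perp_touch_intro hb h)
  have D01 := fun hb hc => para_disj_arith hb hc (hdisj 0 1 (by decide))
  have D02 := fun hb hc => para_disj_arith hb hc (hdisj 0 2 (by decide))
  have D03 := fun hb hc => para_disj_arith hb hc (hdisj 0 3 (by decide))
  have D12 := fun hb hc => para_disj_arith hb hc (hdisj 1 2 (by decide))
  have D13 := fun hb hc => para_disj_arith hb hc (hdisj 1 3 (by decide))
  have D23 := fun hb hc => para_disj_arith hb hc (hdisj 2 3 (by decide))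
  exact key_arith (f 0).horiz (f 1).horiz (f 2).horiz (f 3).horiz
    (f 0).coord (f 0).lo (f 0).hi (f 1).coord (f 1).lo (f 1).hi
    (f 2).coord (f 2).lo (f 2).hi (f 3).coord (f 3).lo (f 3).hi
    (f 0).lt (f 1).lt (f 2).lt (f 3).lt
    E01 E02 E03 E12 E13 N23a N23b D01 D02 D03 D12 D13 D23
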